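/- arXiv:2005.00726 — 4 statements merged into one kernel-verified Lean document; each statement's English description precedes it below -/
import Mathlib

section
/- Let q = p^m with p an odd prime, let n = (q-1)/(p^r+1) for some positive integer r with (p^r+1) | (q-1), and let ω be a primitive element of F_q. For any α_i, α_j ∈ F_q^* with α_i^n ≠ α_j^n, raising α_i^n - α_j^n to the power p^r - 1 gives (α_i^n - α_j^n)^(p^r - 1) = ω^(n(p^r+1)/2) / (α_i^n · α_j^n). -/
/-- Lemma `alpha_ij`: for `q = p^m`, `p` an odd prime, `n = (q-1)/(p^r+1)` and a primitive
element `ω` of `F_q`, for nonzero `αᵢ, αⱼ` with `αᵢ^n ≠ αⱼ^n` one has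
`(αᵢ^n - αⱼ^n)^(p^r - 1) = ω^(n(p^r+1)/2) / (αᵢ^n · αⱼ^n)`. -/
theorem stmt0 {p m r : ℕ} (hp : p.Prime) (hodd : p ≠ 2) (hm : 0 < m) (hr : 0 < r)
    (F : Type*) [Field F] [Fintype F] (hF : Fintype.card F = p ^ m)
    (hdvd : (p ^ r + 1) ∣ (p ^ m - 1))
    (n : ℕ) (hn : n = (p ^ m - 1) / (p ^ r + 1))
    (ω : F) (hω : orderOf ω = p ^ m - 1)
    (αi αj : F) (hi : αi ≠ 0) (hj : αj ≠ 0) (hne : αi ^ n ≠ αj ^ n) :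
    (αi ^ n - αj ^ n) ^ (p ^ r - 1) = ω ^ (n * (p ^ r + 1) / 2) / (αi ^ n * αj ^ n) := by
  haveI : Fact p.Prime := ⟨hp⟩
  -- characteristic
  haveI hcharp : CharP F p := by
    have hdvdc : p ∣ ringChar F := by
      rw [prime_dvd_char_iff_dvd_card, hF]
      exact dvd_pow_self p hm.ne'
    have hcp : (ringChar F).Prime := CharP.char_is_prime F _
    have : ringChar F = p := ((Nat.prime_dvd_prime_iff_eq hp hcp).mp hdvdc).symm
    exact this ▸ ringChar.charP F
  have hq1 : 1 < p ^ m := Nat.one_lt_pow hm.ne' hp.one_lt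
  have hnm : n * (p ^ r + 1) = p ^ m - 1 := by
    rw [hn]; exact Nat.div_mul_cancel hdvd
  set x := αi ^ n with hxdef
  set y := αj ^ n with hydef
  have hx0 : x ≠ 0 := pow_ne_zero _ hi
  have hy0 : y ≠ 0 := pow_ne_zero _ hj
  have hxy : x - y ≠ 0 := sub_ne_zero.mpr hne
  have hx1 : x ^ (p ^ r + 1) = 1 := by
    rw [hxdef, ← pow_mul, hnm, ← hF, FiniteField.pow_card_sub_one_eq_one _ hi]
  have hy1 : y ^ (p ^ r + 1) = 1 := by
    rw [hydef, ← pow_mul, hnm, ← hF, FiniteField.pow_card_sub_one_eq_one _ hj]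
  have hxinv : x ^ (p ^ r) = x⁻¹ := by
    field_simp
    rw [← pow_succ]; exact hx1
  have hyinv : y ^ (p ^ r) = y⁻¹ := by
    field_simp
    rw [← pow_succ]; exact hy1
  have hfrob : (x - y) ^ (p ^ r) = x⁻¹ - y⁻¹ := by
    rw [sub_pow_char_pow, hxinv, hyinv]
  -- ω^((q-1)/2) = -1
  have heven : 2 ∣ p ^ m - 1 := by
    have : Odd (p ^ m) := (hp.odd_of_ne_two hodd).pow
    obtain ⟨k, hk⟩ := this
    omega
  have hωhalf : ω ^ ((p ^ m - 1) / 2) = -1 := by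
    have hsq : (ω ^ ((p ^ m - 1) / 2)) * (ω ^ ((p ^ m - 1) / 2)) = 1 := by
      rw [← pow_add, ← Nat.two_mul, Nat.two_mul_div_two_of_even (even_iff_two_dvd.mpr heven),
        ← hω, pow_orderOf_eq_one]
    rcases mul_self_eq_one_iff.mp hsq with h1 | h1
    · exfalso
      have hdvd2 : orderOf ω ∣ (p ^ m - 1) / 2 := orderOf_dvd_of_pow_eq_one h1
      rw [hω] at hdvd2
      have hpos : 0 < (p ^ m - 1) / 2 := by
        have : 2 ≤ p ^ m - 1 := by
          have h3 : 3 ≤ p := by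
            have := hp.two_le; omega
          have : 3 ≤ p ^ m := le_trans h3 (Nat.le_self_pow hm.ne' p)
          omega
        omega
      have := Nat.le_of_dvd hpos hdvd2
      omega
    · exact h1
  have hexp : n * (p ^ r + 1) / 2 = (p ^ m - 1) / 2 := by rw [hnm]
  rw [hexp, hωhalf]
  -- reduce exponent
  have hpr1 : 1 ≤ p ^ r := Nat.one_le_pow _ _ hp.pos
  have key : (x - y) ^ (p ^ r - 1) * (x - y) = x⁻¹ - y⁻¹ := by
    rw [← pow_succ, Nat.sub_add_cancel hpr1, hfrob]
  have key2 : (x - y) ^ (p ^ r - 1) * ((x - y) * (x * y)) = y - x := by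
    rw [← mul_assoc, key]
    field_simp
  rw [eq_div_iff (mul_ne_zero hx0 hy0)]
  apply mul_right_cancel₀ hxy
  linear_combination key2
end

section
/- Let n be an odd positive integer and C a self-orthogonal linear code over F_q of length n and dimension (n-1)/2. Then there exists a self-orthogonal code C_0 of length n+1 and dimension (n-1)/2 (obtained by appending a zero coordinate), and if there exists a nonzero element x of the quotient space C_0^⊥ / C_0 with x·x = 0, then there exists a self-dual code C_0' of length n+1 and dimension (n+1)/2 with C_0 ⊆ C_0' ⊆ C_0^⊥. -/
open Finset

/-- The Euclidean dual of a linear code `C ⊆ F^n`. -/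
def euclideanDual {F : Type*} [Field F] {n : ℕ} (C : Submodule F (Fin n → F)) :
    Submodule F (Fin n → F) where
  carrier := {x | ∀ c ∈ C, ∑ i, x i * c i = 0}
  add_mem' := by
    intro a b ha hb c hc
    have h1 := ha c hc
    have h2 := hb c hc
    simp only [Pi.add_apply, add_mul, Finset.sum_add_distrib, h1, h2, add_zero]
  zero_mem' := by intro c hc; simp
  smul_mem' := by
    intro r x hx c hc
    have h := hx c hc
    simp only [Pi.smul_apply, smul_eq_mul, mul_assoc, ← Finset.mul_sum, h, mul_zero]

lemma mem_euclideanDual {F : Type*} [Field F] {n : ℕ} {C : Submodule F (Fin n → F)}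
    {x : Fin n → F} : x ∈ euclideanDual C ↔ ∀ c ∈ C, ∑ i, x i * c i = 0 := Iff.rfl

lemma euclideanDual_antitone {F : Type*} [Field F] {n : ℕ} {C D : Submodule F (Fin n → F)}
    (h : C ≤ D) : euclideanDual D ≤ euclideanDual C :=
  fun _ hx c hc => hx c (h hc)

noncomputable def myB (F : Type*) [Field F] (m : ℕ) :
    (Fin m → F) →ₗ[F] Module.Dual F (Fin m → F) :=
  LinearMap.mk₂ F (fun x y => ∑ i, x i * y i)
    (by intro a b y; simp [add_mul, Finset.sum_add_distrib])
    (by intro r a y; simp [mul_assoc, Finset.mul_sum])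
    (by intro x a b; simp [mul_add, Finset.sum_add_distrib])
    (by intro r x y; simp [Finset.mul_sum]; congr 1; funext i; ring)

lemma myB_apply {F : Type*} [Field F] {m : ℕ} (x y : Fin m → F) :
    myB F m x y = ∑ i, x i * y i := rfl

lemma myB_comm {F : Type*} [Field F] {m : ℕ} (x y : Fin m → F) :
    myB F m x y = myB F m y x := by
  simp only [myB_apply, mul_comm]

lemma myB_injective (F : Type*) [Field F] (m : ℕ) : Function.Injective (myB F m) := by
  rw [injective_iff_map_eq_zero]
  intro x hx
  funext j
  have := congrArg (fun f => f (Pi.single j 1)) hx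
  simpa [myB, LinearMap.mk₂, Pi.single_apply, mul_ite, Finset.sum_ite_eq'] using this

lemma finrank_euclideanDual {F : Type*} [Field F] {m : ℕ} (C : Submodule F (Fin m → F)) :
    Module.finrank F (euclideanDual C) + Module.finrank F C = m := by
  classical
  set e := (myB F m).linearEquivOfInjective (myB_injective F m)
    (by simp [Subspace.dual_finrank_eq]) with he
  have hcoe : ∀ x, e x = myB F m x := fun x => rfl
  have hcomap : euclideanDual C =
      Submodule.comap (e : (Fin m → F) →ₗ[F] Module.Dual F (Fin m → F)) C.dualAnnihilator := by
    ext x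
    simp only [mem_euclideanDual, Submodule.mem_comap, LinearEquiv.coe_coe, hcoe,
      Submodule.mem_dualAnnihilator, myB_apply]
  rw [hcomap, Submodule.comap_equiv_eq_map_symm]
  rw [LinearEquiv.finrank_map_eq]
  have h1 : Module.finrank F C.dualAnnihilator = Module.finrank F ((Fin m → F) ⧸ C) :=
    (Subspace.quotEquivAnnihilator C).symm.finrank_eq
  rw [h1, Submodule.finrank_quotient_add_finrank]
  simp

/-- If `n` is odd and `C` is a self-orthogonal `[n, (n-1)/2]` code over `F_q`, then appending a
zero coordinate gives a self-orthogonal `[n+1, (n-1)/2]` code `C₀`, and whenever there is an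
isotropic vector `x ∈ C₀^⊥ \ C₀`, there is a self-dual `[n+1, (n+1)/2]` code `C₀'` with
`C₀ ⊆ C₀' ⊆ C₀^⊥`. -/
theorem stmt4 {F : Type*} [Field F] [Fintype F] {n : ℕ} (hn : Odd n) (hpos : 0 < n)
    (C : Submodule F (Fin n → F)) (hso : C ≤ euclideanDual C)
    (hdim : Module.finrank F C = (n - 1) / 2) :
    ∃ C₀ : Submodule F (Fin (n + 1) → F),
      C₀ = Submodule.map
          ({ toFun := fun x i => if h : (i : ℕ) < n then x ⟨i, h⟩ else 0,
             map_add' := by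
               intro x y; funext i; by_cases h : (i : ℕ) < n <;> simp [h],
             map_smul' := by
               intro r x; funext i; by_cases h : (i : ℕ) < n <;> simp [h] } :
            (Fin n → F) →ₗ[F] (Fin (n + 1) → F)) C ∧
      C₀ ≤ euclideanDual C₀ ∧ Module.finrank F C₀ = (n - 1) / 2 ∧
      ((∃ x ∈ euclideanDual C₀, x ∉ C₀ ∧ ∑ i, x i * x i = 0) →
        ∃ C₀' : Submodule F (Fin (n + 1) → F),
          C₀' = euclideanDual C₀' ∧ Module.finrank F C₀' = (n + 1) / 2 ∧
          C₀ ≤ C₀' ∧ C₀' ≤ euclideanDual C₀) := by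
  classical
  set f : (Fin n → F) →ₗ[F] (Fin (n + 1) → F) :=
    ({ toFun := fun x i => if h : (i : ℕ) < n then x ⟨i, h⟩ else 0,
       map_add' := by
         intro x y; funext i; by_cases h : (i : ℕ) < n <;> simp [h],
       map_smul' := by
         intro r x; funext i; by_cases h : (i : ℕ) < n <;> simp [h] }) with hf
  have hfapp : ∀ (x : Fin n → F) (i : Fin (n + 1)),
      f x i = if h : (i : ℕ) < n then x ⟨i, h⟩ else 0 := fun x i => rfl
  have hfinj : Function.Injective f := by
    intro a b hab
    funext i
    have := congrFun hab ⟨(i : ℕ), Nat.lt_succ_of_lt i.2⟩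
    simpa [hfapp, i.2] using this
  have hsum : ∀ a b : Fin n → F, ∑ i, f a i * f b i = ∑ i, a i * b i := by
    intro a b
    rw [Fin.sum_univ_castSucc]
    have hlast : f a (Fin.last n) = 0 := by simp [hfapp, Fin.last]
    rw [hlast]
    simp only [zero_mul, add_zero]
    apply Finset.sum_congr rfl
    intro i _
    have h1 : f a (Fin.castSucc i) = a i := by simp [hfapp, Fin.castSucc, i.2]
    have h2 : f b (Fin.castSucc i) = b i := by simp [hfapp, Fin.castSucc, i.2]
    rw [h1, h2]
  set C₀ : Submodule F (Fin (n + 1) → F) := Submodule.map f C with hC₀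
  have hso₀ : C₀ ≤ euclideanDual C₀ := by
    rintro y ⟨a, ha, rfl⟩ c ⟨b, hb, rfl⟩
    rw [hsum]
    exact hso ha b hb
  have hdim₀ : Module.finrank F C₀ = (n - 1) / 2 := by
    rw [← hdim]
    exact (Submodule.equivMapOfInjective f hfinj C).symm.finrank_eq
  obtain ⟨k, hk⟩ := hn
  have hkeq : (n - 1) / 2 = k := by omega
  have hkeq' : (n + 1) / 2 = k + 1 := by omega
  refine ⟨C₀, rfl, hso₀, hdim₀, ?_⟩
  rintro ⟨x, hxdual, hxnot, hxiso⟩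
  have hx0 : x ≠ 0 := fun h => hxnot (h ▸ C₀.zero_mem)
  set C₀' : Submodule F (Fin (n + 1) → F) := C₀ ⊔ Submodule.span F {x} with hC₀'
  have hdisj : C₀ ⊓ Submodule.span F {x} = ⊥ := by
    rw [Submodule.eq_bot_iff]
    rintro v ⟨hv1, hv2⟩
    obtain ⟨r, rfl⟩ := Submodule.mem_span_singleton.mp hv2
    by_cases hr : r = 0
    · simp [hr]
    · exact absurd (by simpa [hr] using C₀.smul_mem r⁻¹ hv1) hxnot
  have hdim' : Module.finrank F C₀' = (n + 1) / 2 := by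
    have := Submodule.finrank_sup_add_finrank_inf_eq C₀ (Submodule.span F {x})
    rw [hdisj] at this
    simp only [finrank_bot, add_zero, finrank_span_singleton hx0] at this
    rw [hC₀', this, hdim₀, hkeq, hkeq']
  -- every element of C₀' is a + r • x with a ∈ C₀
  have hmem : ∀ y ∈ C₀', ∃ a ∈ C₀, ∃ r : F, y = a + r • x := by
    intro y hy
    obtain ⟨a, ha, z, hz, rfl⟩ := Submodule.mem_sup.mp hy
    obtain ⟨r, rfl⟩ := Submodule.mem_span_singleton.mp hz
    exact ⟨a, ha, r, rfl⟩
  have hxiso' : myB F (n + 1) x x = 0 := hxiso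
  have hBx : ∀ c ∈ C₀, myB F (n + 1) x c = 0 := fun c hc => hxdual c hc
  have hso' : C₀' ≤ euclideanDual C₀' := by
    intro y hy c hc
    obtain ⟨a, ha, r, rfl⟩ := hmem y hy
    obtain ⟨b, hb, s, rfl⟩ := hmem c hc
    have h1 : myB F (n + 1) a x = 0 := by rw [myB_comm]; exact hBx a ha
    have key : myB F (n + 1) (a + r • x) (b + s • x) = 0 := by
      simp only [map_add, map_smul, LinearMap.add_apply, LinearMap.smul_apply, smul_eq_mul]
      have h2 : myB F (n + 1) a b = 0 := hso₀ ha b hb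
      rw [hxiso', hBx b hb, h1, h2]
      ring
    exact key
  have hdualdim : Module.finrank F (euclideanDual C₀') = (n + 1) / 2 := by
    have := finrank_euclideanDual C₀'
    omega
  have hsd : C₀' = euclideanDual C₀' :=
    Submodule.eq_of_le_of_finrank_eq hso' (by rw [hdim', hdualdim])
  refine ⟨C₀', hsd, hdim', le_sup_left, ?_⟩
  calc C₀' = euclideanDual C₀' := hsd
    _ ≤ euclideanDual C₀ := euclideanDual_antitone le_sup_left
end

section
/- Let q be an odd prime power, n | q - 1, U_n the group of n-th roots of unity in F_q, and β_1 ∈ F_q^* with β_1^n ∉ {0,1}. Set h(x) = x(x^n - 1)(x^n - β_1^n). If -1, n, β_1^n, and β_1^n - 1 are all squares in F_q^*, then h'(β) is a nonzero square in F_q for every β ∈ U_n ∪ β_1 U_n ∪ {0}. -/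
open Polynomial

lemma stmt8_aux (F : Type*) [Field F] (n : ℕ) (a β : F) :
    (derivative (X * (X ^ n - 1) * (X ^ n - C a))).eval β =
      (β ^ n - 1) * (β ^ n - a) + β * (n * β ^ (n-1)) * (β ^ n - a)
        + β * (β ^ n - 1) * (n * β ^ (n-1)) := by
  simp [derivative_mul, derivative_X_pow]
  ring

/-- If `-1`, `n`, `β₁ⁿ` and `β₁ⁿ - 1` are nonzero squares in `F_q`, then for
`h(x) = x(xⁿ - 1)(xⁿ - β₁ⁿ)`, the value `h'(β)` is a nonzero square for every
`β ∈ U_n ∪ β₁U_n ∪ {0}`. -/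
theorem stmt8 (F : Type*) [Field F] [Fintype F]
    (hq : Odd (Fintype.card F)) (n : ℕ) (hn : 0 < n) (hnd : n ∣ Fintype.card F - 1)
    (β₁ : F) (hβ₁ : β₁ ≠ 0) (hβ₁n0 : β₁ ^ n ≠ 0) (hβ₁n1 : β₁ ^ n ≠ 1)
    (hs1 : ∃ c : F, c ≠ 0 ∧ c ^ 2 = -1)
    (hs2 : ∃ c : F, c ≠ 0 ∧ c ^ 2 = (n : F))
    (hs3 : ∃ c : F, c ≠ 0 ∧ c ^ 2 = β₁ ^ n)
    (hs4 : ∃ c : F, c ≠ 0 ∧ c ^ 2 = β₁ ^ n - 1) :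
    ∀ β : F, (β ^ n = 1 ∨ (∃ u : F, u ^ n = 1 ∧ β = β₁ * u) ∨ β = 0) →
      ∃ c : F, c ≠ 0 ∧
        (derivative (X * (X ^ n - 1) * (X ^ n - C (β₁ ^ n)))).eval β = c ^ 2 := by
  obtain ⟨c1, hc1, hc1sq⟩ := hs1
  obtain ⟨c2, hc2, hc2sq⟩ := hs2
  obtain ⟨c3, hc3, hc3sq⟩ := hs3
  obtain ⟨c4, hc4, hc4sq⟩ := hs4
  intro β hβ
  have key : β * β ^ (n-1) = β ^ n := by
    rw [← pow_succ']
    congr 1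
    omega
  rcases hβ with h1 | ⟨u, hu, rfl⟩ | rfl
  · refine ⟨c1 * c2 * c4, by simp [hc1, hc2, hc4], ?_⟩
    rw [h1] at key
    have hval : (derivative (X * (X ^ n - 1) * (X ^ n - C (β₁ ^ n)))).eval β
        = (n : F) * (1 - β₁ ^ n) := by
      rw [stmt8_aux, h1]
      linear_combination ((n : F) * (1 - β₁ ^ n)) * key
    rw [hval, mul_pow, mul_pow, hc1sq, hc2sq, hc4sq]
    ring
  · set β := β₁ * u with hβdef
    have hβn : β ^ n = β₁ ^ n := by rw [hβdef, mul_pow, hu, mul_one]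
    rw [hβn] at key
    refine ⟨c2 * c3 * c4, by simp [hc2, hc3, hc4], ?_⟩
    have hval : (derivative (X * (X ^ n - 1) * (X ^ n - C (β₁ ^ n)))).eval β
        = (n : F) * β₁ ^ n * (β₁ ^ n - 1) := by
      rw [stmt8_aux, hβn]
      linear_combination ((n : F) * (β₁ ^ n - 1)) * key
    rw [hval, mul_pow, mul_pow, hc2sq, hc3sq, hc4sq]
  · refine ⟨c3, hc3, ?_⟩
    rw [stmt8_aux, zero_pow hn.ne', hc3sq]
    ring
end

section
/- Let q = p^m be an odd prime power that is a square (m even), r a positive integer with r | m/2, n = (q-1)/(p^r - 1), and let α_1, ..., α_t ∈ F_q^* have pairwise distinct n-th powers. Then for any 1 ≤ i, j ≤ t with i ≠ j, the element α_i^n - α_j^n is a square in F_q. -/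
/-- For `q = p^m` an odd square, `r ∣ m/2`, `n = (q-1)/(p^r - 1)`, and elements
`α₁, …, α_t ∈ F_q^*` with pairwise distinct `n`-th powers, each difference
`αᵢⁿ - αⱼⁿ` (`i ≠ j`) is a square in `F_q`. -/
theorem stmt9 {p m r t : ℕ} (hp : p.Prime) (hodd : p ≠ 2) (hm : 0 < m) (hme : Even m)
    (hr : 0 < r) (hrm : r ∣ m / 2)
    (F : Type*) [Field F] [Fintype F] (hF : Fintype.card F = p ^ m)
    (n : ℕ) (hn : n = (p ^ m - 1) / (p ^ r - 1))
    (α : Fin t → F) (hα : ∀ i, α i ≠ 0)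
    (hdist : ∀ i j, i ≠ j → α i ^ n ≠ α j ^ n) :
    ∀ i j, i ≠ j → IsSquare (α i ^ n - α j ^ n) := by
  have hp1 : 1 < p := hp.one_lt
  haveI : Fact p.Prime := ⟨hp⟩
  -- characteristic of F is p
  obtain ⟨p', hcp'⟩ := CharP.exists F
  haveI := hcp'
  obtain ⟨k, hp'prime, hcard⟩ := FiniteField.card F p'
  have hpp' : p = p' := by
    have : p ∣ p' ^ (k : ℕ) := by
      rw [← hcard, hF]
      exact dvd_pow_self p hm.ne'
    exact (Nat.prime_dvd_prime_iff_eq hp hp'prime).mp (hp.dvd_of_dvd_pow this)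
  subst hpp'
  -- divisibility facts
  have hrm' : r ∣ m := hrm.trans (Nat.div_dvd_of_dvd (even_iff_two_dvd.mp hme))
  have h2rm : 2 * r ∣ m := by
    obtain ⟨c, hc⟩ := hrm
    obtain ⟨d, hd⟩ := (even_iff_two_dvd.mp hme)
    refine ⟨c, ?_⟩
    have hdc : d = r * c := by omega
    rw [hd, hdc]; ring
  have hdvd1 : p ^ r - 1 ∣ p ^ m - 1 := by
    obtain ⟨c, hc⟩ := hrm'
    simpa only [← pow_mul, one_pow, hc] using Nat.sub_dvd_pow_sub_pow (p ^ r) 1 c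
  have hnmul : n * (p ^ r - 1) = p ^ m - 1 := by
    rw [hn, Nat.div_mul_cancel hdvd1]
  -- p^r - 1 divides (p^m - 1)/2
  have hdvd2 : (p ^ r - 1) * 2 ∣ p ^ m - 1 := by
    have h1 : (p ^ r - 1) * (p ^ r + 1) = p ^ (2 * r) - 1 := by
      have hx : 1 ≤ p ^ r := Nat.one_le_pow _ _ (by omega)
      have hx2 : 1 ≤ p ^ (2 * r) := Nat.one_le_pow _ _ (by omega)
      zify [hx, hx2]
      rw [two_mul, pow_add]; ring
    have h2 : 2 ∣ p ^ r + 1 := by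
      obtain ⟨e, he⟩ := (hp.odd_of_ne_two hodd).pow (n := r)
      omega
    have h3 : (p ^ r - 1) * 2 ∣ p ^ (2 * r) - 1 := by
      obtain ⟨e, he⟩ := h2
      exact ⟨e, by rw [← h1, he]; ring⟩
    refine h3.trans ?_
    obtain ⟨c, hc⟩ := h2rm
    simpa only [← pow_mul, one_pow, hc] using Nat.sub_dvd_pow_sub_pow (p ^ (2 * r)) 1 c
  intro i j hij
  set a := α i ^ n with ha
  set b := α j ^ n with hb
  have hβ : a - b ≠ 0 := sub_ne_zero.mpr (hdist i j hij)
  have hcard1 : 1 < Fintype.card F := Fintype.one_lt_card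
  -- a^(p^r) = a, b^(p^r) = b
  have key : ∀ x : F, x ≠ 0 → (x ^ n) ^ (p ^ r) = x ^ n := by
    intro x hx
    have hpow : x ^ (Fintype.card F - 1) = 1 := FiniteField.pow_card_sub_one_eq_one x hx
    have : (x ^ n) ^ (p ^ r) = x ^ n * (x ^ n) ^ (p ^ r - 1) := by
      rw [← pow_succ']
      congr 1
      have : 1 ≤ p ^ r := Nat.one_le_pow _ _ (by omega)
      omega
    rw [this, ← pow_mul, hnmul, ← hF, hpow, mul_one]
  have hfrob : (a - b) ^ (p ^ r) = a - b := by
    rw [sub_pow_char_pow]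
    rw [key _ (hα i), key _ (hα j)]
  have hβ1 : (a - b) ^ (p ^ r - 1) = 1 := by
    have h1 : 1 ≤ p ^ r := Nat.one_le_pow _ _ (by omega)
    have : (a - b) ^ (p ^ r - 1) * (a - b) = a - b := by
      rw [← pow_succ]
      rw [show p ^ r - 1 + 1 = p ^ r by omega]
      exact hfrob
    have h2 : (a - b) ^ (p ^ r - 1) * (a - b) = 1 * (a - b) := by rw [this, one_mul]
    exact mul_right_cancel₀ hβ h2
  -- conclude
  have hchar2 : ringChar F ≠ 2 := by
    rw [ringChar.eq F p]
    exact hodd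
  rw [FiniteField.isSquare_iff hchar2 hβ]
  have hhalf : p ^ r - 1 ∣ Fintype.card F / 2 := by
    rw [hF]
    obtain ⟨c, hc⟩ := hdvd2
    have hpm : 1 ≤ p ^ m := Nat.one_le_pow _ _ (by omega)
    have : p ^ m / 2 = (p ^ r - 1) * c := by
      obtain ⟨e, he⟩ := (hp.odd_of_ne_two hodd).pow (n := m)
      have h' : (p ^ r - 1) * 2 * c = 2 * ((p ^ r - 1) * c) := by ring
      omega
    exact ⟨c, this⟩
  obtain ⟨c, hc⟩ := hhalf
  rw [hc, pow_mul, hβ1, one_pow]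
end
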